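/- Suppose each loss gradient ∇Q(·;x_n) is δ_n-Lipschitz and set δ² = (1/N)Σ_n δ_n². Let σ² = (1/N)Σ_n ‖∇Q(w°;x_n)‖², where w° minimizes J(w) = (1/N)Σ_n Q(w;x_n). If i is uniformly distributed on {1,...,N}, then for any fixed w: E‖∇J(w) - ∇Q(w;x_i)‖² ≤ 6δ²‖w° - w‖² + 3σ². -/

import Mathlib

open InnerProductSpace

lemma three_sq {a b c : ℝ} (ha : 0 ≤ a) (hb : 0 ≤ b) (hc : 0 ≤ c) :
    (a + b + c) ^ 2 ≤ 3 * (a ^ 2 + b ^ 2 + c ^ 2) := by nlinarith [sq_nonneg (a-b), sq_nonneg (b-c), sq_nonneg (a-c)]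

/-- Variance bound of the SGD gradient noise: if each component gradient is
`δₙ`-Lipschitz, `δ² = (1/N)Σ δₙ²`, `σ² = (1/N)Σ ‖∇Q(w°;xₙ)‖²`, and `w°` minimizes
`J = (1/N)Σ Q(·;xₙ)`, then for any fixed `w`,
`E‖∇J(w) - ∇Q(w;xᵢ)‖² ≤ 6δ²‖w° - w‖² + 3σ²` with `i` uniform on `{1,…,N}`. -/
theorem sgd_gradient_noise_bound
    {E : Type*} [NormedAddCommGroup E] [InnerProductSpace ℝ E] [CompleteSpace E]
    {N : ℕ} (hN : 0 < N)
    (Q : Fin N → E → ℝ) (gradQ : Fin N → E → E) (J : E → ℝ) (gradJ : E → E)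
    (δn : Fin N → ℝ) (δ σ : ℝ) (wo : E)
    (hQ : ∀ n x, HasGradientAt (Q n) (gradQ n x) x)
    (hJ : ∀ x, J x = (N : ℝ)⁻¹ * ∑ n, Q n x)
    (hgradJ : ∀ x, gradJ x = (N : ℝ)⁻¹ • ∑ n, gradQ n x)
    (hLip : ∀ n x y, ‖gradQ n x - gradQ n y‖ ≤ δn n * ‖x - y‖)
    (hδ : δ ^ 2 = (N : ℝ)⁻¹ * ∑ n, δn n ^ 2)
    (hσ : σ ^ 2 = (N : ℝ)⁻¹ * ∑ n, ‖gradQ n wo‖ ^ 2)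
    (hmin : IsMinOn J Set.univ wo)
    (w : E) :
    (N : ℝ)⁻¹ * ∑ n, ‖gradJ w - gradQ n w‖ ^ 2 ≤
      6 * δ ^ 2 * ‖wo - w‖ ^ 2 + 3 * σ ^ 2 := by
  have hNpos : (0:ℝ) < N := Nat.cast_pos.mpr hN
  -- J has gradient gradJ at every point
  have hJgrad : ∀ x, HasGradientAt J (gradJ x) x := by
    intro x
    have h1 : HasFDerivAt (fun y => ∑ n, Q n y)
        (∑ n, toDual ℝ E (gradQ n x)) x :=
      HasFDerivAt.fun_sum (fun n _ => (hQ n x).hasFDerivAt)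
    have hJeq : J = fun y => (N:ℝ)⁻¹ • ∑ n, Q n y := funext fun y => by
      simpa [smul_eq_mul] using hJ y
    have h2 : HasFDerivAt J ((N:ℝ)⁻¹ • ∑ n, toDual ℝ E (gradQ n x)) x := by
      rw [hJeq]; exact h1.const_smul (N:ℝ)⁻¹
    rw [hasGradientAt_iff_hasFDerivAt, hgradJ]
    simpa [map_smul, map_sum] using h2
  -- gradient vanishes at minimizer
  have hzero : gradJ wo = 0 := by
    have h := (hmin.isLocalMin (by simp)).hasFDerivAt_eq_zero (hJgrad wo).hasFDerivAt
    have := (toDual ℝ E).map_zero ▸ h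
    exact (toDual ℝ E).injective (by simpa using h)
  -- bound on ‖gradJ w‖²
  have hA2 : ‖gradJ w‖ ^ 2 ≤ δ ^ 2 * ‖wo - w‖ ^ 2 := by
    have hrepr : gradJ w = (N:ℝ)⁻¹ • ∑ n, (gradQ n w - gradQ n wo) := by
      have h0 := hgradJ wo
      rw [hzero] at h0
      rw [hgradJ w, Finset.sum_sub_distrib, smul_sub, ← h0, sub_zero]
    have hA : ‖gradJ w‖ ≤ (N:ℝ)⁻¹ * (∑ n, δn n) * ‖wo - w‖ := by
      rw [hrepr]
      calc ‖(N:ℝ)⁻¹ • ∑ n, (gradQ n w - gradQ n wo)‖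
          ≤ (N:ℝ)⁻¹ * ∑ n, ‖gradQ n w - gradQ n wo‖ := by
            rw [norm_smul]
            gcongr
            · simp [abs_of_nonneg (le_of_lt (inv_pos.mpr hNpos))]
            · exact norm_sum_le _ _
        _ ≤ (N:ℝ)⁻¹ * ∑ n, δn n * ‖wo - w‖ :=
            mul_le_mul_of_nonneg_left
              (Finset.sum_le_sum fun n _ => by simpa [norm_sub_rev] using hLip n w wo)
              (le_of_lt (inv_pos.mpr hNpos))
        _ = (N:ℝ)⁻¹ * (∑ n, δn n) * ‖wo - w‖ := by
            rw [← Finset.sum_mul]; ring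
    have hA2' : ‖gradJ w‖ ^ 2 ≤ ((N:ℝ)⁻¹ * (∑ n, δn n) * ‖wo - w‖) ^ 2 :=
      pow_le_pow_left₀ (norm_nonneg _) hA 2
    have hCS : (∑ n, δn n) ^ 2 ≤ (N:ℝ) * ∑ n, δn n ^ 2 := by
      simpa using sq_sum_le_card_mul_sum_sq (s := Finset.univ) (f := δn)
    calc ‖gradJ w‖ ^ 2 ≤ ((N:ℝ)⁻¹ * (∑ n, δn n) * ‖wo - w‖) ^ 2 := hA2'
      _ = (N:ℝ)⁻¹ * (N:ℝ)⁻¹ * (∑ n, δn n) ^ 2 * ‖wo - w‖ ^ 2 := by ring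
      _ ≤ (N:ℝ)⁻¹ * (N:ℝ)⁻¹ * ((N:ℝ) * ∑ n, δn n ^ 2) * ‖wo - w‖ ^ 2 := by
          gcongr
      _ = δ ^ 2 * ‖wo - w‖ ^ 2 := by
          rw [hδ]; field_simp
  -- pointwise bound
  have hpt : ∀ n, ‖gradJ w - gradQ n w‖ ^ 2 ≤
      3 * (‖gradJ w‖ ^ 2 + ‖gradQ n wo‖ ^ 2 + δn n ^ 2 * ‖wo - w‖ ^ 2) := by
    intro n
    have htri : ‖gradJ w - gradQ n w‖ ≤
        ‖gradJ w‖ + ‖gradQ n wo‖ + ‖gradQ n wo - gradQ n w‖ := by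
      have : gradJ w - gradQ n w =
          gradJ w + (-(gradQ n wo)) + (gradQ n wo - gradQ n w) := by abel
      rw [this]
      calc ‖gradJ w + (-(gradQ n wo)) + (gradQ n wo - gradQ n w)‖
          ≤ ‖gradJ w + (-(gradQ n wo))‖ + ‖gradQ n wo - gradQ n w‖ := norm_add_le _ _
        _ ≤ ‖gradJ w‖ + ‖gradQ n wo‖ + ‖gradQ n wo - gradQ n w‖ := by
            gcongr; simpa using norm_add_le (gradJ w) (-(gradQ n wo))
    have h1 : ‖gradJ w - gradQ n w‖ ^ 2 ≤
        (‖gradJ w‖ + ‖gradQ n wo‖ + ‖gradQ n wo - gradQ n w‖) ^ 2 :=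
      pow_le_pow_left₀ (norm_nonneg _) htri 2
    have h2 := three_sq (norm_nonneg (gradJ w)) (norm_nonneg (gradQ n wo))
      (norm_nonneg (gradQ n wo - gradQ n w))
    have h3 : ‖gradQ n wo - gradQ n w‖ ^ 2 ≤ δn n ^ 2 * ‖wo - w‖ ^ 2 := by
      have := pow_le_pow_left₀ (norm_nonneg _) (hLip n wo w) 2
      calc ‖gradQ n wo - gradQ n w‖ ^ 2 ≤ (δn n * ‖wo - w‖) ^ 2 := this
        _ = δn n ^ 2 * ‖wo - w‖ ^ 2 := by ring
    nlinarith
  -- sum up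
  have hsum : ∑ n, ‖gradJ w - gradQ n w‖ ^ 2 ≤
      ∑ n, 3 * (‖gradJ w‖ ^ 2 + ‖gradQ n wo‖ ^ 2 + δn n ^ 2 * ‖wo - w‖ ^ 2) :=
    Finset.sum_le_sum fun n _ => hpt n
  have hNinv : (0:ℝ) < (N:ℝ)⁻¹ := inv_pos.mpr hNpos
  calc (N : ℝ)⁻¹ * ∑ n, ‖gradJ w - gradQ n w‖ ^ 2
      ≤ (N:ℝ)⁻¹ * ∑ n, 3 * (‖gradJ w‖ ^ 2 + ‖gradQ n wo‖ ^ 2 + δn n ^ 2 * ‖wo - w‖ ^ 2) := by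
        gcongr
    _ = 3 * ‖gradJ w‖ ^ 2 + 3 * ((N:ℝ)⁻¹ * ∑ n, ‖gradQ n wo‖ ^ 2)
        + 3 * ((N:ℝ)⁻¹ * ∑ n, δn n ^ 2) * ‖wo - w‖ ^ 2 := by
        have hterm : ∀ n : Fin N,
            3 * (‖gradJ w‖ ^ 2 + ‖gradQ n wo‖ ^ 2 + δn n ^ 2 * ‖wo - w‖ ^ 2)
            = 3 * ‖gradJ w‖ ^ 2 + 3 * ‖gradQ n wo‖ ^ 2
              + (3 * ‖wo - w‖ ^ 2) * δn n ^ 2 := fun n => by ring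
        rw [Finset.sum_congr rfl fun n _ => hterm n,
          Finset.sum_add_distrib, Finset.sum_add_distrib, Finset.sum_const,
          ← Finset.mul_sum, ← Finset.mul_sum, Finset.card_univ, Fintype.card_fin,
          nsmul_eq_mul]
        field_simp
    _ = 3 * ‖gradJ w‖ ^ 2 + 3 * σ ^ 2 + 3 * δ ^ 2 * ‖wo - w‖ ^ 2 := by
        rw [← hσ, ← hδ]
    _ ≤ 6 * δ ^ 2 * ‖wo - w‖ ^ 2 + 3 * σ ^ 2 := by nlinarith
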